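/- For every positive integer m and every positive integer t, the number of points x ∈ ℤ^m lying in the dilate t·P(m,2) equals C(3t+m, m) − m·C(t+m−1, m), where C(a,b) denotes the binomial coefficient. -/

import Mathlib

open scoped Pointwise

/-- The vertex set of the partial permutohedron: vectors in `{0,1,…,n}^m`
whose nonzero entries are pairwise distinct. -/
def ppVertices (m n : ℕ) : Set (Fin m → ℝ) :=
  {x | (∀ i, ∃ k : ℕ, k ≤ n ∧ x i = k) ∧
       ∀ i j : Fin m, i ≠ j → x i ≠ 0 → x j ≠ 0 → x i ≠ x j}

/-- The partial permutohedron `P(m,n)`. -/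
def partialPermutohedron (m n : ℕ) : Set (Fin m → ℝ) :=
  convexHull ℝ (ppVertices m n)

/-- The number of lattice points in the dilate `t·P(m,n)`. -/
noncomputable def latticeCount (m n t : ℕ) : ℕ :=
  {x : Fin m → ℤ | (fun i => (x i : ℝ)) ∈ (t : ℝ) • partialPermutohedron m n}.ncard

open Finset


/-- Vectors in `ℕ^m` with coordinate sum at most `N`. -/
noncomputable def simplexPts (m N : ℕ) : Finset (Fin m → ℕ) :=
  (Fintype.piFinset fun _ : Fin m => Finset.range (N+1)).filter fun x => ∑ i, x i ≤ N

lemma mem_simplexPts {m N : ℕ} {x : Fin m → ℕ} :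
    x ∈ simplexPts m N ↔ ∑ i, x i ≤ N := by
  simp only [simplexPts, mem_filter, Fintype.mem_piFinset, mem_range]
  constructor
  · exact fun h => h.2
  · intro h
    refine ⟨fun i => Nat.lt_succ_of_le (le_trans ?_ h), h⟩
    exact Finset.single_le_sum (f := x) (fun j _ => Nat.zero_le _) (mem_univ i)

lemma card_simplexPts (m N : ℕ) : (simplexPts m N).card = (N + m).choose m := by
  induction m generalizing N with
  | zero =>
    rw [Nat.choose_zero_right]
    rw [Finset.card_eq_one]
    exact ⟨(fun i => 0), by ext x; simp [mem_simplexPts, Subsingleton.elim x fun i => 0]⟩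
  | succ m ih =>
    have hfib : (simplexPts (m+1) N).card
        = ∑ a ∈ Finset.range (N+1), ((simplexPts (m+1) N).filter fun x => x 0 = a).card := by
      apply Finset.card_eq_sum_card_fiberwise
      intro x hx
      rw [Finset.mem_coe, mem_simplexPts] at hx
      rw [Finset.mem_coe, mem_range]
      refine Nat.lt_succ_of_le (le_trans ?_ hx)
      exact Finset.single_le_sum (f := x) (fun j _ => Nat.zero_le _) (mem_univ 0)
    have hfibcard : ∀ a ∈ Finset.range (N+1),
        ((simplexPts (m+1) N).filter fun x => x 0 = a).card = (simplexPts m (N - a)).card := by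
      intro a ha
      rw [mem_range, Nat.lt_succ_iff] at ha
      refine Finset.card_bij' (fun x _ => Fin.tail x) (fun y _ => Fin.cons a y) ?_ ?_ ?_ ?_
      · intro x hx
        simp only [mem_filter, mem_simplexPts, Fin.sum_univ_succ] at hx
        rw [mem_simplexPts]
        show ∑ i : Fin m, x i.succ ≤ N - a
        clear hfib
        omega
      · intro y hy
        rw [mem_simplexPts] at hy
        rw [mem_filter, mem_simplexPts, Fin.sum_univ_succ]
        simp only [Fin.cons_zero, Fin.cons_succ]
        refine ⟨?_, trivial⟩
        clear hfib
        omega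
      · intro x hx
        simp only [mem_filter] at hx
        funext i
        refine Fin.cases ?_ ?_ i
        · simp [hx.2]
        · intro j; simp [Fin.tail]
      · intro y _
        funext i
        simp [Fin.tail]
    rw [hfib, Finset.sum_congr rfl hfibcard]
    have : ∀ a ∈ Finset.range (N+1), (simplexPts m (N - a)).card = (N - a + m).choose m :=
      fun a _ => ih (N - a)
    rw [Finset.sum_congr rfl this]
    have hrev : ∑ a ∈ Finset.range (N+1), (N - a + m).choose m
        = ∑ a ∈ Finset.range (N+1), (a + m).choose m := by
      refine Finset.sum_nbij' (fun a => N - a) (fun a => N - a) ?_ ?_ ?_ ?_ ?_ <;>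
        intro a ha <;> simp only [mem_range, Nat.lt_succ_iff] at ha ⊢ <;>
        clear hfib hfibcard this <;>
        first
        | omega
        | (congr 2; omega)
    rw [hrev, Nat.sum_range_add_choose N m, Nat.add_assoc]

noncomputable def cutPts (m t : ℕ) : Finset (Fin m → ℕ) :=
  (simplexPts m (3*t)).filter fun x => ∀ i, x i ≤ 2*t

lemma mem_cutPts {m t : ℕ} {x : Fin m → ℕ} :
    x ∈ cutPts m t ↔ (∑ i, x i ≤ 3*t ∧ ∀ i, x i ≤ 2*t) := by
  rw [cutPts, mem_filter, mem_simplexPts]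

lemma card_one_bad (m t : ℕ) (ht : 0 < t) (i : Fin m) :
    ((simplexPts m (3*t)).filter fun x => 2*t < x i).card = (simplexPts m (t-1)).card := by
  refine Finset.card_nbij' (fun x => Function.update x i (x i - (2*t+1)))
    (fun y => Function.update y i (y i + (2*t+1))) ?_ ?_ ?_ ?_
  · intro x hx
    beta_reduce
    rw [Finset.mem_coe, mem_filter, mem_simplexPts] at hx
    rw [Finset.mem_coe, mem_simplexPts]
    have hsum : ∑ j, Function.update x i (x i - (2*t+1)) j
        = (x i - (2*t+1)) + ∑ j ∈ Finset.univ \ {i}, x j :=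
      Finset.sum_update_of_mem (Finset.mem_univ i) _ _
    have hx2 : x i + ∑ j ∈ Finset.univ \ {i}, x j = ∑ j, x j := by
      rw [← Finset.erase_eq]
      exact Finset.add_sum_erase _ x (Finset.mem_univ i)
    omega
  · intro y hy
    beta_reduce
    rw [Finset.mem_coe, mem_simplexPts] at hy
    rw [Finset.mem_coe, mem_filter, mem_simplexPts]
    have hsum : ∑ j, Function.update y i (y i + (2*t+1)) j
        = (y i + (2*t+1)) + ∑ j ∈ Finset.univ \ {i}, y j :=
      Finset.sum_update_of_mem (Finset.mem_univ i) _ _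
    have hy2 : y i + ∑ j ∈ Finset.univ \ {i}, y j = ∑ j, y j := by
      rw [← Finset.erase_eq]
      exact Finset.add_sum_erase _ y (Finset.mem_univ i)
    have hupd : Function.update y i (y i + (2*t+1)) i = y i + (2*t+1) :=
      Function.update_self i _ y
    exact ⟨by omega, by rw [hupd]; omega⟩
  · intro x hx
    beta_reduce
    rw [Finset.mem_coe, mem_filter] at hx
    have h2 := hx.2
    funext j
    rcases eq_or_ne j i with rfl | hji
    · simp only [Function.update_self]
      omega
    · simp [Function.update_of_ne hji]
  · intro y _
    beta_reduce
    funext j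
    rcases eq_or_ne j i with rfl | hji
    · simp only [Function.update_self]
      omega
    · simp [Function.update_of_ne hji]

lemma bad_disjoint (m t : ℕ) {i j : Fin m} (hij : i ≠ j) :
    Disjoint ((simplexPts m (3*t)).filter fun x => 2*t < x i)
      ((simplexPts m (3*t)).filter fun x => 2*t < x j) := by
  rw [Finset.disjoint_left]
  intro x hxi hxj
  rw [mem_filter, mem_simplexPts] at hxi hxj
  have hpair : x i + x j ≤ ∑ k, x k := by
    rw [← Finset.sum_pair hij]
    exact Finset.sum_le_sum_of_subset (Finset.subset_univ _)
  omega

lemma card_cutPts (m t : ℕ) (ht : 0 < t) :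
    (cutPts m t).card + m * ((t + m - 1).choose m) = (3*t + m).choose m := by
  classical
  have hsplit : (cutPts m t).card
      + ((simplexPts m (3*t)).filter fun x => ¬ ∀ i, x i ≤ 2*t).card
      = (simplexPts m (3*t)).card :=
    Finset.card_filter_add_card_filter_not _
  have hbad : ((simplexPts m (3*t)).filter fun x => ¬ ∀ i, x i ≤ 2*t)
      = Finset.univ.biUnion fun i => (simplexPts m (3*t)).filter fun x => 2*t < x i := by
    ext x
    simp only [mem_filter, Finset.mem_biUnion, Finset.mem_univ, true_and, not_forall, not_le]
    constructor
    · rintro ⟨h1, i, h2⟩; exact ⟨i, h1, h2⟩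
    · rintro ⟨i, h1, h2⟩; exact ⟨h1, i, h2⟩
  rw [hbad, Finset.card_biUnion fun i _ j _ hij => bad_disjoint m t hij] at hsplit
  have hsum : ∑ i : Fin m, ((simplexPts m (3*t)).filter fun x => 2*t < x i).card
      = m * (simplexPts m (t-1)).card := by
    rw [Finset.sum_congr rfl fun i _ => card_one_bad m t ht i, Finset.sum_const,
      Finset.card_univ, Fintype.card_fin, smul_eq_mul]
  rw [hsum, card_simplexPts, card_simplexPts] at hsplit
  have ht1 : t - 1 + m = t + m - 1 := (Nat.sub_add_comm ht).symm
  rw [← hsplit, ht1]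


def Qset (m : ℕ) : Set (Fin m → ℝ) :=
  {x | (∀ i, 0 ≤ x i ∧ x i ≤ 2) ∧ ∑ i, x i ≤ 3}

lemma zero_mem_V (m : ℕ) : (0 : Fin m → ℝ) ∈ ppVertices m 2 :=
  ⟨fun _ => ⟨0, by norm_num⟩, fun _ _ _ hi _ => absurd rfl hi⟩

lemma single_mem_V (m : ℕ) (i1 : Fin m) : (Pi.single i1 (2:ℝ)) ∈ ppVertices m 2 := by
  constructor
  · intro i
    rcases eq_or_ne i i1 with rfl | h
    · exact ⟨2, le_refl _, by simp⟩
    · exact ⟨0, by norm_num, by simp [Pi.single_apply, h]⟩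
  · intro i j hij hi hj
    exfalso
    rcases eq_or_ne i i1 with rfl | h
    · exact hj (by simp [Pi.single_apply, hij.symm])
    · exact hi (by simp [Pi.single_apply, h])

lemma pair_apply {m : ℕ} {i1 i2 : Fin m} (h : i1 ≠ i2) (i : Fin m) :
    ((Pi.single i1 2 + Pi.single i2 1 : Fin m → ℝ)) i
      = if i = i1 then 2 else if i = i2 then 1 else 0 := by
  rcases eq_or_ne i i1 with rfl | h1 <;> rcases eq_or_ne i i2 with rfl | h2 <;>
    simp_all [Pi.single_apply]

lemma pair_mem_V (m : ℕ) {i1 i2 : Fin m} (h : i1 ≠ i2) :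
    ((Pi.single i1 2 + Pi.single i2 1 : Fin m → ℝ)) ∈ ppVertices m 2 := by
  constructor
  · intro i
    by_cases h1 : i = i1
    · exact ⟨2, le_refl _, by rw [pair_apply h i, if_pos h1]; norm_num⟩
    · by_cases h2 : i = i2
      · exact ⟨1, by norm_num, by rw [pair_apply h i, if_neg h1, if_pos h2]; norm_num⟩
      · exact ⟨0, by norm_num, by rw [pair_apply h i, if_neg h1, if_neg h2]; norm_num⟩
  · intro i j hij hi hj
    rw [pair_apply h i] at hi ⊢
    rw [pair_apply h j] at hj ⊢
    by_cases hi1 : i = i1 <;> by_cases hi2 : i = i2 <;>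
      by_cases hj1 : j = i1 <;> by_cases hj2 : j = i2 <;>
      simp_all <;> norm_num

lemma vertices_subset_Q (m : ℕ) : ppVertices m 2 ⊆ Qset m := by
  rintro x ⟨hval, hdist⟩
  have hco : ∀ i, 0 ≤ x i ∧ x i ≤ 2 := by
    intro i
    obtain ⟨k, hk, hxk⟩ := hval i
    refine ⟨by rw [hxk]; positivity, by rw [hxk]; exact_mod_cast hk⟩
  refine ⟨hco, ?_⟩
  classical
  set s := Finset.univ.filter (fun i => x i ≠ 0) with hs
  have hsum : ∑ i, x i = ∑ i ∈ s, x i := (Finset.sum_filter_ne_zero _).symm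
  have hinj : ∀ i ∈ s, ∀ j ∈ s, x i = x j → i = j := by
    intro i hi j hj hxe
    by_contra hij
    exact hdist i j hij (Finset.mem_filter.mp hi).2 (Finset.mem_filter.mp hj).2 hxe
  have himg : ∑ i ∈ s, x i = ∑ v ∈ s.image x, v :=
    (Finset.sum_image (s := s) (g := x) (f := fun v => v) hinj).symm
  have hsub : s.image x ⊆ ({1, 2} : Finset ℝ) := by
    intro v hv
    obtain ⟨i, hi, rfl⟩ := Finset.mem_image.mp hv
    have hne : x i ≠ 0 := (Finset.mem_filter.mp hi).2
    obtain ⟨k, hk, hxk⟩ := hval i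
    have hk0 : k ≠ 0 := by rintro rfl; rw [hxk] at hne; exact hne (by norm_num)
    have : k = 1 ∨ k = 2 := by omega
    rcases this with rfl | rfl
    · rw [hxk]; norm_num
    · rw [hxk]; norm_num
  have hle : ∑ v ∈ s.image x, v ≤ ∑ v ∈ ({1, 2} : Finset ℝ), v := by
    apply Finset.sum_le_sum_of_subset_of_nonneg hsub
    intro v hv _
    rcases Finset.mem_insert.mp hv with rfl | hv2
    · norm_num
    · rw [Finset.mem_singleton] at hv2; rw [hv2]; norm_num
  have h12 : ∑ v ∈ ({1, 2} : Finset ℝ), v = 3 := by norm_num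
  rw [hsum, himg]
  rw [h12] at hle
  exact hle

lemma convex_Q (m : ℕ) : Convex ℝ (Qset m) := by
  intro x hx y hy a b ha hb hab
  obtain ⟨hx1, hx2⟩ := hx; obtain ⟨hy1, hy2⟩ := hy
  constructor
  · intro i
    have h1 := (hx1 i).1; have h2 := (hx1 i).2
    have h3 := (hy1 i).1; have h4 := (hy1 i).2
    constructor
    · simp only [Pi.add_apply, Pi.smul_apply, smul_eq_mul]; nlinarith
    · simp only [Pi.add_apply, Pi.smul_apply, smul_eq_mul]; nlinarith
  · simp only [Pi.add_apply, Pi.smul_apply, smul_eq_mul]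
    rw [Finset.sum_add_distrib, ← Finset.mul_sum, ← Finset.mul_sum]
    nlinarith

lemma finite_V (m : ℕ) : (ppVertices m 2).Finite := by
  have hsub : ppVertices m 2 ⊆
      (Set.range fun f : Fin m → Fin 3 => fun i => ((f i : ℕ) : ℝ)) := by
    rintro x ⟨hval, _⟩
    have h : ∀ i, ∃ k : Fin 3, x i = ((k : ℕ) : ℝ) := by
      intro i; obtain ⟨k, hk, hxk⟩ := hval i; exact ⟨⟨k, by omega⟩, hxk⟩
    choose f hf using h
    exact ⟨f, by funext i; exact (hf i).symm⟩
  exact (Set.finite_range _).subset hsub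

lemma key_ineq (m : ℕ) (hm : 0 < m) (c : Fin m → ℝ) (x : Fin m → ℝ)
    (hx : x ∈ Qset m) : ∃ v ∈ ppVertices m 2, ∑ i, c i * x i ≤ ∑ i, c i * v i := by
  obtain ⟨hxb, hxs⟩ := hx
  have : Nonempty (Fin m) := ⟨⟨0, hm⟩⟩
  obtain ⟨i1, -, h1⟩ := Finset.exists_max_image Finset.univ c Finset.univ_nonempty
  by_cases hc1 : c i1 ≤ 0
  · refine ⟨0, zero_mem_V m, ?_⟩
    have hz : ∑ i, c i * (0 : Fin m → ℝ) i = 0 := by simp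
    rw [hz]
    apply Finset.sum_nonpos
    intro i _
    have := mul_le_mul_of_nonneg_right (le_trans (h1 i (Finset.mem_univ i)) hc1) (hxb i).1
    simpa using this
  push_neg at hc1
  by_cases hm2 : ((Finset.univ : Finset (Fin m)).erase i1).Nonempty
  · obtain ⟨i2, hi2mem, h2⟩ := Finset.exists_max_image _ c hm2
    have hi12 : i1 ≠ i2 := (Finset.ne_of_mem_erase hi2mem).symm
    by_cases hc2 : c i2 ≤ 0
    · refine ⟨(Pi.single i1 2 : Fin m → ℝ), single_mem_V m i1, ?_⟩
      rw [← Finset.add_sum_erase _ (fun i => c i * x i) (Finset.mem_univ i1),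
          ← Finset.add_sum_erase _ (fun i => c i * (Pi.single i1 2 : Fin m → ℝ) i) (Finset.mem_univ i1)]
      have hA : ∑ i ∈ Finset.univ.erase i1, c i * x i ≤ 0 := by
        apply Finset.sum_nonpos
        intro i hi
        exact mul_nonpos_of_nonpos_of_nonneg (le_trans (h2 i hi) hc2) (hxb i).1
      have hB : ∑ i ∈ Finset.univ.erase i1, c i * (Pi.single i1 2 : Fin m → ℝ) i = 0 := by
        apply Finset.sum_eq_zero
        intro i hi
        rw [Pi.single_eq_of_ne (Finset.ne_of_mem_erase hi), mul_zero]
      have hC : c i1 * x i1 ≤ c i1 * (Pi.single i1 2 : Fin m → ℝ) i1 := by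
        rw [Pi.single_eq_same]
        exact mul_le_mul_of_nonneg_left (hxb i1).2 (le_of_lt hc1)
      linarith
    · push_neg at hc2
      refine ⟨(Pi.single i1 2 + Pi.single i2 1 : Fin m → ℝ), pair_mem_V m hi12, ?_⟩
      have hR : ∑ i, c i * (Pi.single i1 2 + Pi.single i2 1 : Fin m → ℝ) i
          = c i1 * 2 + c i2 * 1 := by
        have hterm : ∀ i, c i * (Pi.single i1 2 + Pi.single i2 1 : Fin m → ℝ) i
            = (if i = i1 then c i * 2 else 0) + (if i = i2 then c i * 1 else 0) := by
          intro i
          rw [pair_apply hi12 i]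
          by_cases h1' : i = i1
          · subst h1'
            rw [if_pos rfl, if_pos rfl, if_neg hi12, add_zero]
          · by_cases h2' : i = i2
            · subst h2'
              rw [if_neg h1', if_pos rfl, if_neg h1', if_pos rfl, zero_add]
            · rw [if_neg h1', if_neg h2', if_neg h1', if_neg h2', mul_zero, add_zero]
        rw [Finset.sum_congr rfl fun i _ => hterm i, Finset.sum_add_distrib,
          Finset.sum_ite_eq' Finset.univ i1 (fun i => c i * 2),
          Finset.sum_ite_eq' Finset.univ i2 (fun i => c i * 1),
          if_pos (Finset.mem_univ i1), if_pos (Finset.mem_univ i2)]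
      rw [hR]
      have hsplit : ∑ i, c i * x i
          = c i1 * x i1 + ∑ i ∈ Finset.univ.erase i1, c i * x i :=
        (Finset.add_sum_erase _ (fun i => c i * x i) (Finset.mem_univ i1)).symm
      have hEr : ∑ i ∈ Finset.univ.erase i1, c i * x i
          ≤ ∑ i ∈ Finset.univ.erase i1, c i2 * x i := by
        apply Finset.sum_le_sum
        intro i hi
        exact mul_le_mul_of_nonneg_right (h2 i hi) (hxb i).1
      have hErx : ∑ i ∈ Finset.univ.erase i1, x i = (∑ i, x i) - x i1 := by
        have := Finset.add_sum_erase Finset.univ x (Finset.mem_univ i1)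
        linarith
      have hEr2 : ∑ i ∈ Finset.univ.erase i1, c i2 * x i
          = c i2 * ((∑ i, x i) - x i1) := by
        rw [← Finset.mul_sum, hErx]
      have hc12 : c i2 ≤ c i1 := h1 i2 (Finset.mem_univ i2)
      have hx1 : x i1 ≤ 2 := (hxb i1).2
      have hx0 : 0 ≤ x i1 := (hxb i1).1
      nlinarith [mul_nonneg (sub_nonneg.mpr hc12) (sub_nonneg.mpr hx1),
        mul_nonneg (le_of_lt hc2) (sub_nonneg.mpr hxs)]
  · refine ⟨(Pi.single i1 2 : Fin m → ℝ), single_mem_V m i1, ?_⟩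
    have he : (Finset.univ : Finset (Fin m)).erase i1 = ∅ :=
      Finset.not_nonempty_iff_eq_empty.mp hm2
    rw [← Finset.add_sum_erase _ (fun i => c i * x i) (Finset.mem_univ i1),
        ← Finset.add_sum_erase _ (fun i => c i * (Pi.single i1 2 : Fin m → ℝ) i) (Finset.mem_univ i1),
        he, Finset.sum_empty, Finset.sum_empty]
    simp only [add_zero, Pi.single_eq_same]
    exact mul_le_mul_of_nonneg_left (hxb i1).2 (le_of_lt hc1)

theorem pp_eq_Q (m : ℕ) (hm : 0 < m) : partialPermutohedron m 2 = Qset m := by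
  apply Set.Subset.antisymm
  · exact convexHull_min (vertices_subset_Q m) (convex_Q m)
  · intro x hx
    by_contra hnot
    obtain ⟨f, u, hfa, hfx⟩ := geometric_hahn_banach_closed_point
      (convex_convexHull ℝ _) ((finite_V m).isClosed_convexHull (𝕜 := ℝ)) hnot
    obtain ⟨v, hv, hle⟩ := key_ineq m hm (fun i => f (Pi.single i 1)) x hx
    have hfy : ∀ y : Fin m → ℝ, f y = ∑ i, f (Pi.single i 1) * y i := by
      intro y
      conv_lhs => rw [← Finset.univ_sum_single y]
      rw [map_sum]
      refine Finset.sum_congr rfl fun i _ => ?_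
      have hsm : (Pi.single i (y i) : Fin m → ℝ) = y i • (Pi.single i 1 : Fin m → ℝ) := by
        rw [← Pi.single_smul, smul_eq_mul, mul_one]
      rw [hsm, map_smul, smul_eq_mul, mul_comm]
    have hvx : f x ≤ f v := by rw [hfy x, hfy v]; exact hle
    have := hfa v (subset_convexHull ℝ _ hv)
    linarith

lemma mem_dilate (m t : ℕ) (hm : 0 < m) (ht : 0 < t) (x : Fin m → ℤ) :
    ((fun i => (x i : ℝ)) ∈ (t : ℝ) • partialPermutohedron m 2)
      ↔ ((∀ i, 0 ≤ x i ∧ x i ≤ 2 * t) ∧ ∑ i, x i ≤ 3 * t) := by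
  have ht0 : (0:ℝ) < t := by exact_mod_cast ht
  rw [pp_eq_Q m hm]
  constructor
  · rintro ⟨y, ⟨hyb, hys⟩, hyx⟩
    have hxy : ∀ i, (x i : ℝ) = t * y i := by
      intro i
      have := congrFun hyx i
      simpa [Pi.smul_apply, smul_eq_mul] using this.symm
    constructor
    · intro i
      constructor
      · have : (0:ℝ) ≤ (x i : ℝ) := by
          rw [hxy i]; exact mul_nonneg (le_of_lt ht0) (hyb i).1
        exact_mod_cast this
      · have : (x i : ℝ) ≤ 2 * t := by
          rw [hxy i]
          calc (t:ℝ) * y i ≤ t * 2 := by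
                exact mul_le_mul_of_nonneg_left (hyb i).2 (le_of_lt ht0)
            _ = 2 * t := by ring
        exact_mod_cast this
    · have : ((∑ i, x i : ℤ) : ℝ) ≤ 3 * t := by
        push_cast
        rw [Finset.sum_congr rfl fun i _ => hxy i, ← Finset.mul_sum]
        calc (t:ℝ) * ∑ i, y i ≤ t * 3 :=
              mul_le_mul_of_nonneg_left hys (le_of_lt ht0)
          _ = 3 * t := by ring
      exact_mod_cast this
  · rintro ⟨hb, hs⟩
    refine ⟨fun i => (x i : ℝ) / t, ⟨?_, ?_⟩, ?_⟩
    · intro i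
      constructor
      · apply div_nonneg _ (le_of_lt ht0)
        exact_mod_cast (hb i).1
      · rw [div_le_iff₀ ht0]
        have : (x i : ℝ) ≤ 2 * t := by exact_mod_cast (hb i).2
        linarith
    · rw [← Finset.sum_div, div_le_iff₀ ht0]
      have : ((∑ i, x i : ℤ) : ℝ) ≤ 3 * t := by exact_mod_cast hs
      push_cast at this
      linarith
    · funext i
      simp only [Pi.smul_apply, smul_eq_mul]
      field_simp

lemma dilate_set_eq (m t : ℕ) (hm : 0 < m) (ht : 0 < t) :
    {x : Fin m → ℤ | (fun i => (x i : ℝ)) ∈ (t : ℝ) • partialPermutohedron m 2}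
      = ↑((cutPts m t).image fun y : Fin m → ℕ => (fun i => (y i : ℤ))) := by
  ext x
  rw [Set.mem_setOf_eq, mem_dilate m t hm ht, Finset.coe_image, Set.mem_image]
  constructor
  · rintro ⟨hb, hs⟩
    refine ⟨fun i => (x i).toNat, ?_, ?_⟩
    · rw [Finset.mem_coe, mem_cutPts]
      constructor
      · have hcast : ((∑ i, (x i).toNat : ℕ) : ℤ) = ∑ i, x i := by
          push_cast
          exact Finset.sum_congr rfl fun i _ => Int.toNat_of_nonneg (hb i).1
        have : ((∑ i, (x i).toNat : ℕ) : ℤ) ≤ ((3 * t : ℕ) : ℤ) := by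
          rw [hcast]; push_cast; exact_mod_cast hs
        exact_mod_cast this
      · intro i
        have := (hb i).1
        have := (hb i).2
        omega
    · funext i
      exact Int.toNat_of_nonneg (hb i).1
  · rintro ⟨y, hy, rfl⟩
    rw [Finset.mem_coe, mem_cutPts] at hy
    constructor
    · intro i
      have h2 := hy.2 i
      constructor
      · show (0:ℤ) ≤ (y i : ℤ)
        exact_mod_cast Int.ofNat_nonneg (y i)
      · show ((y i : ℤ)) ≤ (2 * t : ℕ)
        exact_mod_cast h2
    · have : ((∑ i, y i : ℕ) : ℤ) ≤ ((3 * t : ℕ) : ℤ) := by exact_mod_cast hy.1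
      push_cast at this ⊢
      exact this

/-- The Ehrhart polynomial of `P(m,2)`:
`|t·P(m,2) ∩ ℤ^m| = C(3t+m, m) - m·C(t+m-1, m)`. -/
theorem ehrhart_Pm2 (m t : ℕ) (hm : 0 < m) (ht : 0 < t) :
    (latticeCount m 2 t : ℤ) =
      ((3 * t + m).choose m : ℤ) - (m : ℤ) * ((t + m - 1).choose m : ℤ) := by
  have hcount : latticeCount m 2 t = (cutPts m t).card := by
    rw [latticeCount, dilate_set_eq m t hm ht, Set.ncard_coe_finset]
    apply Finset.card_image_of_injective
    intro a b hab
    funext i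
    have h2 : ((a i : ℤ)) = (b i : ℤ) := congrFun hab i
    exact_mod_cast h2
  have hmain := card_cutPts m t ht
  have : ((cutPts m t).card : ℤ) + (m : ℤ) * ((t + m - 1).choose m : ℤ)
      = ((3 * t + m).choose m : ℤ) := by exact_mod_cast hmain
  rw [hcount]
  linarith
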